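/- Let n ≥ 1, 0 ≤ p ≤ q and u ∈ ℂ^{2n}. Then for every 0 ≤ k ≤ p and every symplectic homogeneous polynomial R ∈ R_{p−k,q+k}, one has ⟨Z^S_{p,q}(·,u), (E)^k R⟩_∂ = δ_{k0}·R(u); i.e., Z^S_{p,q} is the reproducing kernel of R_{p,q} with respect to the Fischer inner product. -/

import Mathlib

open MvPolynomial

noncomputable section

/-- The inclusion `Fin n → Fin (2n)`, `j ↦ j`. -/
def il (n : ℕ) (j : Fin n) : Fin (2 * n) := ⟨j.1, by have := j.2; omega⟩

/-- The inclusion `Fin n → Fin (2n)`, `j ↦ n + j`. -/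
def ir (n : ℕ) (j : Fin n) : Fin (2 * n) := ⟨n + j.1, by have := j.2; omega⟩

/-- Bihomogeneous of bidegree `(p,q)` on `ℂ^{2n}`
(variables `Sum.inl j = z_j`, `Sum.inr j = z̄_j`, `j : Fin 2n`). -/
def BiHom (n : ℕ) (P : MvPolynomial (Fin (2 * n) ⊕ Fin (2 * n)) ℂ) (p q : ℕ) : Prop :=
  ∀ α ∈ P.support,
    (∑ j : Fin (2 * n), α (Sum.inl j)) = p ∧ (∑ j : Fin (2 * n), α (Sum.inr j)) = q

/-- The twisted Euler operator `E = ∑_{j=1}^n (z_j ∂_{z̄_{n+j}} − z_{n+j} ∂_{z̄_j})`. -/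
def Eop (n : ℕ) (P : MvPolynomial (Fin (2 * n) ⊕ Fin (2 * n)) ℂ) :
    MvPolynomial (Fin (2 * n) ⊕ Fin (2 * n)) ℂ :=
  ∑ j : Fin n,
    (X (Sum.inl (il n j)) * pderiv (Sum.inr (ir n j)) P
      - X (Sum.inl (ir n j)) * pderiv (Sum.inr (il n j)) P)

/-- The twisted Euler operator `E† = −∑_{j=1}^n (z̄_j ∂_{z_{n+j}} − z̄_{n+j} ∂_{z_j})`. -/
def Edag (n : ℕ) (P : MvPolynomial (Fin (2 * n) ⊕ Fin (2 * n)) ℂ) :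
    MvPolynomial (Fin (2 * n) ⊕ Fin (2 * n)) ℂ :=
  -∑ j : Fin n,
    (X (Sum.inr (il n j)) * pderiv (Sum.inl (ir n j)) P
      - X (Sum.inr (ir n j)) * pderiv (Sum.inl (il n j)) P)


/-- The polynomial `⟨z,ū⟩ = ∑_{j=1}^{2n} conj(u_j) z_j`. -/
def Apoly (n : ℕ) (u : Fin (2 * n) → ℂ) : MvPolynomial (Fin (2 * n) ⊕ Fin (2 * n)) ℂ :=
  ∑ j : Fin (2 * n), C ((starRingEnd ℂ) (u j)) * X (Sum.inl j)

/-- The polynomial `⟨z̄,u⟩ = ∑_{j=1}^{2n} u_j z̄_j`. -/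
def Bpoly (n : ℕ) (u : Fin (2 * n) → ℂ) : MvPolynomial (Fin (2 * n) ⊕ Fin (2 * n)) ℂ :=
  ∑ j : Fin (2 * n), C (u j) * X (Sum.inr j)

/-- The polynomial `⟨z,u⟩_s = ∑_{j=1}^{n} (z_j u_{n+j} − z_{n+j} u_j)`. -/
def Cpoly (n : ℕ) (u : Fin (2 * n) → ℂ) : MvPolynomial (Fin (2 * n) ⊕ Fin (2 * n)) ℂ :=
  ∑ j : Fin n,
    (C (u (ir n j)) * X (Sum.inl (il n j)) - C (u (il n j)) * X (Sum.inl (ir n j)))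

/-- The polynomial `⟨z̄,ū⟩_s = ∑_{j=1}^{n} (z̄_j conj(u_{n+j}) − z̄_{n+j} conj(u_j))`. -/
def Cbarpoly (n : ℕ) (u : Fin (2 * n) → ℂ) : MvPolynomial (Fin (2 * n) ⊕ Fin (2 * n)) ℂ :=
  ∑ j : Fin n,
    (C ((starRingEnd ℂ) (u (ir n j))) * X (Sum.inr (il n j))
      - C ((starRingEnd ℂ) (u (il n j))) * X (Sum.inr (ir n j)))

/-- The symplectic kernel
`Z^S_{p,q}(z,u) = ((q−p+1)/(p!(q+1)!)) ⟨z̄,u⟩^{q−p} (⟨z,ū⟩⟨z̄,u⟩ + ⟨z,u⟩_s ⟨z̄,ū⟩_s)^p`. -/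
def Zsymp (n p q : ℕ) (u : Fin (2 * n) → ℂ) : MvPolynomial (Fin (2 * n) ⊕ Fin (2 * n)) ℂ :=
  C ((((q - p + 1 : ℕ) : ℂ)) / ((p.factorial : ℂ) * ((q + 1).factorial : ℂ))) *
    Bpoly n u ^ (q - p) *
    (Apoly n u * Bpoly n u + Cpoly n u * Cbarpoly n u) ^ p

/-- The complex Fischer inner product, antilinear in the first argument, determined on
monomials by `⟨z^α z̄^β, z^γ z̄^δ⟩_∂ = α! β! δ_{αγ} δ_{βδ}`. -/
def fischer {σ : Type*} (P Q : MvPolynomial σ ℂ) : ℂ :=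
  ∑ α ∈ Q.support,
    (starRingEnd ℂ) (P.coeff α) * Q.coeff α * α.prod (fun _ k => (k.factorial : ℂ))

namespace SympAux

abbrev Vars (n : ℕ) := Fin (2 * n) ⊕ Fin (2 * n)
abbrev Poly (n : ℕ) := MvPolynomial (Vars n) ℂ

lemma pderiv_pderiv_comm {σ : Type*} (i j : σ) (P : MvPolynomial σ ℂ) :
    pderiv i (pderiv j P) = pderiv j (pderiv i P) := by
  classical
  induction P using MvPolynomial.induction_on' with
  | add p q hp hq => simp [hp, hq]
  | monomial α a =>
    simp only [pderiv_monomial]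
    by_cases h : i = j
    · subst h; rfl
    · have hs : α - (Finsupp.single j 1 : σ →₀ ℕ) - Finsupp.single i 1
          = α - Finsupp.single i 1 - Finsupp.single j 1 := by
        ext x
        simp only [Finsupp.tsub_apply, Finsupp.single_apply]
        omega
      have h1 : (α - (Finsupp.single j 1 : σ →₀ ℕ)) i = α i := by
        rw [Finsupp.tsub_apply, Finsupp.single_apply, if_neg (Ne.symm h)]
        simp
      have h2 : (α - (Finsupp.single i 1 : σ →₀ ℕ)) j = α j := by
        rw [Finsupp.tsub_apply, Finsupp.single_apply, if_neg h]
        simp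
      rw [hs, h1, h2]
      ring_nf

section Ops
variable {n : ℕ} {ι κ : Type*} [Fintype ι] [Fintype κ]

/-- Constant-coefficient first-order differential operator. -/
def Dop (c : ι → ℂ) (v : ι → Vars n) (P : Poly n) : Poly n :=
  ∑ x : ι, C (c x) * pderiv (v x) P

/-- First-order differential operator with linear coefficients. -/
def Xop (d : κ → ℂ) (xv dv : κ → Vars n) (P : Poly n) : Poly n :=
  ∑ y : κ, C (d y) * (X (xv y) * pderiv (dv y) P)

lemma Dop_add (c : ι → ℂ) (v : ι → Vars n) (P Q : Poly n) :
    Dop c v (P + Q) = Dop c v P + Dop c v Q := by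
  simp [Dop, mul_add, Finset.sum_add_distrib]

lemma Dop_zero (c : ι → ℂ) (v : ι → Vars n) : Dop c v (0 : Poly n) = 0 := by
  simp [Dop]

lemma Dop_sum (c : ι → ℂ) (v : ι → Vars n) {β : Type*} (s : Finset β) (f : β → Poly n) :
    Dop c v (∑ b ∈ s, f b) = ∑ b ∈ s, Dop c v (f b) := by
  classical
  induction s using Finset.induction_on with
  | empty => simp [Dop_zero]
  | insert _ _ h ih => rw [Finset.sum_insert h, Dop_add, ih, Finset.sum_insert h]

lemma Dop_comm (c : ι → ℂ) (v : ι → Vars n) (d : κ → ℂ) (w : κ → Vars n) (P : Poly n) :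
    Dop c v (Dop d w P) = Dop d w (Dop c v P) := by
  unfold Dop
  rw [show (∑ x : ι, C (c x) * pderiv (v x) (∑ y : κ, C (d y) * pderiv (w y) P))
      = ∑ x : ι, ∑ y : κ, C (c x) * (C (d y) * pderiv (v x) (pderiv (w y) P)) by
    refine Finset.sum_congr rfl fun x _ => ?_
    rw [map_sum, Finset.mul_sum]
    refine Finset.sum_congr rfl fun y _ => ?_
    rw [pderiv_C_mul]]
  rw [Finset.sum_comm]
  refine Finset.sum_congr rfl fun y _ => ?_
  rw [map_sum, Finset.mul_sum]
  refine Finset.sum_congr rfl fun x _ => ?_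
  rw [pderiv_C_mul, pderiv_pderiv_comm]
  ring

lemma Dop_C_mul_X_pderiv (c : ι → ℂ) (v : ι → Vars n) (e : ℂ) (a b : Vars n) (P : Poly n) :
    Dop c v (C e * (X a * pderiv b P))
      = C e * (X a * pderiv b (Dop c v P))
        + C ((∑ x : ι, if v x = a then c x else 0) * e) * pderiv b P := by
  classical
  unfold Dop
  have step : ∀ x : ι, C (c x) * pderiv (v x) (C e * (X a * pderiv b P))
      = C e * (X a * (C (c x) * pderiv b (pderiv (v x) P)))
        + C ((if v x = a then c x else 0) * e) * pderiv b P := by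
    intro x
    rw [pderiv_C_mul, pderiv_mul, pderiv_pderiv_comm]
    by_cases h : v x = a
    · rw [if_pos h]; subst h
      rw [pderiv_X_self, map_mul]; ring
    · rw [if_neg h, pderiv_X_of_ne (Ne.symm h)]
      simp only [zero_mul, map_zero]; ring
  rw [Finset.sum_congr rfl fun x _ => step x, Finset.sum_add_distrib]
  congr 1
  · rw [map_sum, Finset.mul_sum, Finset.mul_sum]
    refine Finset.sum_congr rfl fun x _ => ?_
    rw [pderiv_C_mul]
  · rw [← Finset.sum_mul, ← map_sum, ← Finset.sum_mul]

lemma Dop_Xop (c : ι → ℂ) (v : ι → Vars n) (d : κ → ℂ) (xv dv : κ → Vars n) (P : Poly n) :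
    Dop c v (Xop d xv dv P)
      = Xop d xv dv (Dop c v P)
        + ∑ y : κ, C ((∑ x : ι, if v x = xv y then c x else 0) * d y) * pderiv (dv y) P := by
  classical
  unfold Xop
  rw [Dop_sum]
  rw [Finset.sum_congr rfl fun y _ => Dop_C_mul_X_pderiv c v (d y) (xv y) (dv y) P]
  rw [Finset.sum_add_distrib]

end Ops
section Spec
variable {n : ℕ} (u : Fin (2 * n) → ℂ)

/-- `D_A = ∑ u_j ∂_{z_j}`. -/
def DA (P : Poly n) : Poly n := Dop u Sum.inl P

/-- `D_B = ∑ conj(u_j) ∂_{z̄_j}`. -/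
def DB (P : Poly n) : Poly n := Dop (fun j => (starRingEnd ℂ) (u j)) Sum.inr P

/-- `D_C = ∑ (conj(u_{n+j}) ∂_{z_j} − conj(u_j) ∂_{z_{n+j}})`. -/
def DC (P : Poly n) : Poly n :=
  Dop (Sum.elim (fun j : Fin n => (starRingEnd ℂ) (u (ir n j)))
        (fun j : Fin n => -(starRingEnd ℂ) (u (il n j))))
      (Sum.elim (fun j => Sum.inl (il n j)) (fun j => Sum.inl (ir n j))) P

/-- `D_C̄ = ∑ (u_{n+j} ∂_{z̄_j} − u_j ∂_{z̄_{n+j}})`. -/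
def DCb (P : Poly n) : Poly n :=
  Dop (Sum.elim (fun j : Fin n => u (ir n j)) (fun j : Fin n => -(u (il n j))))
      (Sum.elim (fun j => Sum.inr (il n j)) (fun j => Sum.inr (ir n j))) P

lemma Eop_eq (P : Poly n) :
    Eop n P = Xop (Sum.elim (fun _ : Fin n => (1:ℂ)) (fun _ : Fin n => (-1:ℂ)))
      (Sum.elim (fun j => Sum.inl (il n j)) (fun j => Sum.inl (ir n j)))
      (Sum.elim (fun j => Sum.inr (ir n j)) (fun j => Sum.inr (il n j))) P := by
  rw [Eop, Xop, Fintype.sum_sum_type]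
  simp only [Sum.elim_inl, Sum.elim_inr, map_one, one_mul, map_neg, neg_mul,
    Finset.sum_neg_distrib]
  rw [Finset.sum_sub_distrib]
  ring_nf

lemma Edag_eq (P : Poly n) :
    Edag n P = Xop (Sum.elim (fun _ : Fin n => (1:ℂ)) (fun _ : Fin n => (-1:ℂ)))
      (Sum.elim (fun j => Sum.inr (ir n j)) (fun j => Sum.inr (il n j)))
      (Sum.elim (fun j => Sum.inl (il n j)) (fun j => Sum.inl (ir n j))) P := by
  rw [Edag, Xop, Fintype.sum_sum_type]
  simp only [Sum.elim_inl, Sum.elim_inr, map_one, one_mul, map_neg, neg_mul,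
    Finset.sum_neg_distrib]
  rw [Finset.sum_sub_distrib, neg_sub]
  ring_nf

lemma il_injEq (j k : Fin n) : (il n j = il n k) = (j = k) := by
  simp [il, Fin.ext_iff]

lemma ir_injEq (j k : Fin n) : (ir n j = ir n k) = (j = k) := by
  simp [ir, Fin.ext_iff]

lemma il_ne_ir (j k : Fin n) : il n j ≠ ir n k := by
  simp only [il, ir, Fin.ext_iff, ne_eq]
  have := j.2
  omega

lemma ir_ne_il (j k : Fin n) : ir n j ≠ il n k := fun h => il_ne_ir k j h.symm

lemma sum_fin_two_mul {M : Type*} [AddCommMonoid M] (f : Fin (2 * n) → M) :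
    ∑ i, f i = ∑ j : Fin n, f (il n j) + ∑ j : Fin n, f (ir n j) := by
  have h2 : 2 * n = n + n := by omega
  have e1 : ∑ i : Fin (2 * n), f i = ∑ i : Fin (n + n), f (Fin.cast h2.symm i) :=
    Fintype.sum_equiv (finCongr h2) _ _ (fun i => rfl)
  rw [e1, Fin.sum_univ_add]
  rfl

end Spec
section Comms
variable {n : ℕ} (u : Fin (2 * n) → ℂ)

lemma comm_DA_E (P : Poly n) : DA u (Eop n P) = Eop n (DA u P) - DCb u P := by
  rw [Eop_eq, Eop_eq, DA, DA, Dop_Xop, sub_eq_add_neg]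
  congr 1
  rw [DCb, Dop]
  simp only [Fintype.sum_sum_type, Sum.elim_inl, Sum.elim_inr, Sum.inl.injEq,
    Finset.sum_ite_eq', Finset.mem_univ, if_true, mul_one, mul_neg_one, map_neg, neg_mul,
    neg_add, Finset.sum_neg_distrib]
  try abel

lemma comm_DB_E (P : Poly n) : DB u (Eop n P) = Eop n (DB u P) := by
  rw [Eop_eq, Eop_eq, DB, DB, Dop_Xop]
  simp

lemma comm_DC_E (P : Poly n) : DC u (Eop n P) = Eop n (DC u P) + DB u P := by
  rw [Eop_eq, Eop_eq, DC, DC, Dop_Xop]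
  congr 1
  rw [DB, Dop, sum_fin_two_mul (fun i => C ((starRingEnd ℂ) (u i)) * pderiv (Sum.inr i) P)]
  simp only [Fintype.sum_sum_type, Sum.elim_inl, Sum.elim_inr, Sum.inl.injEq,
    il_injEq, ir_injEq, il_ne_ir, ir_ne_il, Finset.sum_ite_eq', Finset.mem_univ, if_true,
    if_false, mul_one, mul_neg_one, neg_mul, neg_neg, add_zero, zero_add,
    Finset.sum_const_zero]
  try abel

lemma comm_DCb_E (P : Poly n) : DCb u (Eop n P) = Eop n (DCb u P) := by
  rw [Eop_eq, Eop_eq, DCb, DCb, Dop_Xop]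
  simp

lemma comm_DA_Edag (P : Poly n) : DA u (Edag n P) = Edag n (DA u P) := by
  rw [Edag_eq, Edag_eq, DA, DA, Dop_Xop]
  simp

lemma comm_DC_Edag (P : Poly n) : DC u (Edag n P) = Edag n (DC u P) := by
  rw [Edag_eq, Edag_eq, DC, DC, Dop_Xop]
  simp

lemma comm_DB_Edag (P : Poly n) : DB u (Edag n P) = Edag n (DB u P) + DC u P := by
  rw [Edag_eq, Edag_eq, DB, DB, Dop_Xop]
  congr 1
  rw [DC, Dop]
  simp only [Fintype.sum_sum_type, Sum.elim_inl, Sum.elim_inr, Sum.inr.injEq,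
    Finset.sum_ite_eq', Finset.mem_univ, if_true, mul_one, mul_neg_one, map_neg, neg_mul]
  try abel

lemma comm_DCb_Edag (P : Poly n) : DCb u (Edag n P) = Edag n (DCb u P) - DA u P := by
  rw [Edag_eq, Edag_eq, DCb, DCb, Dop_Xop, sub_eq_add_neg]
  congr 1
  rw [DA, Dop, sum_fin_two_mul (fun i => C (u i) * pderiv (Sum.inl i) P)]
  simp only [Fintype.sum_sum_type, Sum.elim_inl, Sum.elim_inr, Sum.inr.injEq,
    il_injEq, ir_injEq, il_ne_ir, ir_ne_il, Finset.sum_ite_eq', Finset.mem_univ, if_true,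
    if_false, mul_one, mul_neg_one, neg_mul, neg_neg, add_zero, zero_add, map_neg,
    neg_add, Finset.sum_const_zero, Finset.sum_neg_distrib]
  try abel

end Comms
section Core
variable {n : ℕ} (u : Fin (2 * n) → ℂ)

/-- Evaluation point: `z_j = u_j`, `z̄_j = conj u_j`. -/
def weval : Vars n → ℂ := Sum.elim u (fun j => (starRingEnd ℂ) (u j))

/-- The adjoint of multiplication by `AB + CC̄`. -/
def Delta (P : Poly n) : Poly n := DA u (DB u P) + DC u (DCb u P)

lemma iter_comm_one {α : Type*} {f g : α → α} (h : ∀ x, f (g x) = g (f x)) :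
    ∀ (m : ℕ) (x : α), f (g^[m] x) = g^[m] (f x) := by
  intro m
  induction m with
  | zero => intro x; rfl
  | succ m ih =>
    intro x
    rw [Function.iterate_succ_apply, ih, h, ← Function.iterate_succ_apply]

lemma iter_comm {α : Type*} {f g : α → α} (h : ∀ x, f (g x) = g (f x)) :
    ∀ (k m : ℕ) (x : α), f^[k] (g^[m] x) = g^[m] (f^[k] x) := by
  intro k
  induction k with
  | zero => intro m x; rfl
  | succ k ih =>
    intro m x
    rw [Function.iterate_succ_apply, iter_comm_one h, ih, ← Function.iterate_succ_apply]

/-! ### Sums with an `if` removed -/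

lemma sum_sub_ite {m : ℕ} (g : Fin m → ℕ) (i : Fin m) (h : g i ≠ 0) :
    ∑ j, (g j - if i = j then 1 else 0) = (∑ j, g j) - 1 := by
  classical
  have h1 : ∑ j, (g j - if i = j then 1 else 0) = (∑ j ∈ Finset.univ.erase i, g j) + (g i - 1) := by
    rw [← Finset.sum_erase_add _ _ (Finset.mem_univ i), if_pos rfl]
    congr 1
    refine Finset.sum_congr rfl fun j hj => ?_
    rw [if_neg (Ne.symm (Finset.ne_of_mem_erase hj)), Nat.sub_zero]
  have h2 : (∑ j ∈ Finset.univ.erase i, g j) + g i = ∑ j, g j :=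
    Finset.sum_erase_add _ _ (Finset.mem_univ i)
  rw [h1]
  omega

lemma mul_prod_pow_sub {σ : Type*} [Fintype σ] [DecidableEq σ] (w : σ → ℂ) (α : σ →₀ ℕ)
    (i : σ) (h : α i ≠ 0) :
    w i * ∏ x, w x ^ (α x - (Finsupp.single i 1 : σ →₀ ℕ) x) = ∏ x, w x ^ (α x) := by
  have key : ∀ x : σ, (Finsupp.single i 1 : σ →₀ ℕ) x = if i = x then 1 else 0 := by
    intro x
    rw [Finsupp.single_apply]
  rw [Finset.prod_congr rfl fun x _ => by rw [key x]]
  rw [← Finset.prod_erase_mul _ _ (Finset.mem_univ i),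
    ← Finset.prod_erase_mul _ (fun x => w x ^ (α x)) (Finset.mem_univ i)]
  have h1 : ∀ x ∈ Finset.univ.erase i, w x ^ (α x - if i = x then 1 else 0) = w x ^ α x := by
    intro x hx
    rw [if_neg (Ne.symm (Finset.ne_of_mem_erase hx)), Nat.sub_zero]
  rw [Finset.prod_congr rfl h1, if_pos rfl]
  obtain ⟨m, hm⟩ := Nat.exists_eq_succ_of_ne_zero h
  rw [hm, Nat.succ_sub_one, pow_succ]
  ring

/-! ### BiHom transport -/

lemma bihom_zero (a b : ℕ) : BiHom n (0 : Poly n) a b := by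
  intro α hα
  simp at hα

lemma bihom_add {P Q : Poly n} {a b : ℕ} (hP : BiHom n P a b) (hQ : BiHom n Q a b) :
    BiHom n (P + Q) a b := by
  intro α hα
  have := MvPolynomial.support_add (p := P) (q := Q) hα
  rcases Finset.mem_union.mp this with h | h
  · exact hP α h
  · exact hQ α h

lemma bihom_sum {β : Type*} {s : Finset β} {f : β → Poly n} {a b : ℕ}
    (h : ∀ x ∈ s, BiHom n (f x) a b) : BiHom n (∑ x ∈ s, f x) a b := by
  classical
  induction s using Finset.induction_on with
  | empty => simpa using bihom_zero a b
  | @insert x s hx ih =>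
    rw [Finset.sum_insert hx]
    exact bihom_add (h x (Finset.mem_insert_self x s))
      (ih fun y hy => h y (Finset.mem_insert_of_mem hy))

lemma bihom_C_mul {P : Poly n} {a b : ℕ} (c : ℂ) (h : BiHom n P a b) :
    BiHom n (C c * P) a b := by
  intro α hα
  rw [← smul_eq_C_mul] at hα
  exact h α (MvPolynomial.support_smul hα)

lemma bihom_pderiv_inl {P : Poly n} {a b : ℕ} (i : Fin (2 * n)) (h : BiHom n P a b) :
    BiHom n (pderiv (Sum.inl i) P) (a - 1) b := by
  intro β hβ
  have hrep : pderiv (Sum.inl i) P = ∑ α ∈ P.support,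
      monomial (α - Finsupp.single (Sum.inl i) 1) (P.coeff α * (α (Sum.inl i) : ℂ)) := by
    conv_lhs => rw [P.as_sum]
    rw [map_sum]
    refine Finset.sum_congr rfl fun α _ => ?_
    rw [pderiv_monomial]
  rw [hrep] at hβ
  obtain ⟨α, hα, hβm⟩ := Finset.mem_biUnion.mp (MvPolynomial.support_sum hβ)
  have hβs := MvPolynomial.support_monomial_subset hβm
  have hβeq : β = α - Finsupp.single (Sum.inl i) 1 := by simpa using hβs
  have hne : α (Sum.inl i) ≠ 0 := by
    intro h0
    rw [h0] at hβm
    simp at hβm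
  obtain ⟨hα1, hα2⟩ := h α hα
  subst hβeq
  constructor
  · have key : ∀ j : Fin (2 * n), ((α - Finsupp.single (Sum.inl i) 1 : Vars n →₀ ℕ)) (Sum.inl j)
        = α (Sum.inl j) - (if i = j then 1 else 0) := by
      intro j
      rw [Finsupp.tsub_apply, Finsupp.single_apply]
      congr 1
      simp [Sum.inl.injEq]
    rw [Finset.sum_congr rfl fun j _ => key j, sum_sub_ite _ i hne, hα1]
  · have key : ∀ j : Fin (2 * n), ((α - Finsupp.single (Sum.inl i) 1 : Vars n →₀ ℕ)) (Sum.inr j)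
        = α (Sum.inr j) := by
      intro j
      rw [Finsupp.tsub_apply, Finsupp.single_apply, if_neg (by simp), Nat.sub_zero]
    rw [Finset.sum_congr rfl fun j _ => key j, hα2]

lemma bihom_pderiv_inr {P : Poly n} {a b : ℕ} (i : Fin (2 * n)) (h : BiHom n P a b) :
    BiHom n (pderiv (Sum.inr i) P) a (b - 1) := by
  intro β hβ
  have hrep : pderiv (Sum.inr i) P = ∑ α ∈ P.support,
      monomial (α - Finsupp.single (Sum.inr i) 1) (P.coeff α * (α (Sum.inr i) : ℂ)) := by
    conv_lhs => rw [P.as_sum]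
    rw [map_sum]
    refine Finset.sum_congr rfl fun α _ => ?_
    rw [pderiv_monomial]
  rw [hrep] at hβ
  obtain ⟨α, hα, hβm⟩ := Finset.mem_biUnion.mp (MvPolynomial.support_sum hβ)
  have hβs := MvPolynomial.support_monomial_subset hβm
  have hβeq : β = α - Finsupp.single (Sum.inr i) 1 := by simpa using hβs
  have hne : α (Sum.inr i) ≠ 0 := by
    intro h0
    rw [h0] at hβm
    simp at hβm
  obtain ⟨hα1, hα2⟩ := h α hα
  subst hβeq
  constructor
  · have key : ∀ j : Fin (2 * n), ((α - Finsupp.single (Sum.inr i) 1 : Vars n →₀ ℕ)) (Sum.inl j)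
        = α (Sum.inl j) := by
      intro j
      rw [Finsupp.tsub_apply, Finsupp.single_apply, if_neg (by simp), Nat.sub_zero]
    rw [Finset.sum_congr rfl fun j _ => key j, hα1]
  · have key : ∀ j : Fin (2 * n), ((α - Finsupp.single (Sum.inr i) 1 : Vars n →₀ ℕ)) (Sum.inr j)
        = α (Sum.inr j) - (if i = j then 1 else 0) := by
      intro j
      rw [Finsupp.tsub_apply, Finsupp.single_apply]
      congr 1
      simp [Sum.inr.injEq]
    rw [Finset.sum_congr rfl fun j _ => key j, sum_sub_ite _ i hne, hα2]

lemma bihom_DA {P : Poly n} {a b : ℕ} (h : BiHom n P a b) : BiHom n (DA u P) (a - 1) b :=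
  bihom_sum fun j _ => bihom_C_mul _ (bihom_pderiv_inl j h)

lemma bihom_DB {P : Poly n} {a b : ℕ} (h : BiHom n P a b) : BiHom n (DB u P) a (b - 1) :=
  bihom_sum fun j _ => bihom_C_mul _ (bihom_pderiv_inr j h)

lemma bihom_DC {P : Poly n} {a b : ℕ} (h : BiHom n P a b) : BiHom n (DC u P) (a - 1) b := by
  refine bihom_sum fun x _ => ?_
  cases x with
  | inl j => exact bihom_C_mul _ (bihom_pderiv_inl _ h)
  | inr j => exact bihom_C_mul _ (bihom_pderiv_inl _ h)

lemma bihom_DCb {P : Poly n} {a b : ℕ} (h : BiHom n P a b) : BiHom n (DCb u P) a (b - 1) := by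
  refine bihom_sum fun x _ => ?_
  cases x with
  | inl j => exact bihom_C_mul _ (bihom_pderiv_inr _ h)
  | inr j => exact bihom_C_mul _ (bihom_pderiv_inr _ h)

lemma bihom_Delta {P : Poly n} {a b : ℕ} (h : BiHom n P a b) :
    BiHom n (Delta u P) (a - 1) (b - 1) :=
  bihom_add (bihom_DA u (bihom_DB u h)) (bihom_DC u (bihom_DCb u h))

/-! ### Vanishing on low degree -/

lemma pderiv_inl_eq_zero {P : Poly n} {b : ℕ} (h : BiHom n P 0 b) (i : Fin (2 * n)) :
    pderiv (Sum.inl i) P = 0 := by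
  conv_lhs => rw [P.as_sum]
  rw [map_sum]
  refine Finset.sum_eq_zero fun α hα => ?_
  rw [pderiv_monomial]
  have h0 : α (Sum.inl i) = 0 := by
    have := (h α hα).1
    have := Finset.sum_eq_zero_iff.mp this i (Finset.mem_univ i)
    exact this
  rw [h0]
  simp

lemma DA_eq_zero {P : Poly n} {b : ℕ} (h : BiHom n P 0 b) : DA u P = 0 := by
  rw [DA, Dop]
  refine Finset.sum_eq_zero fun j _ => ?_
  rw [pderiv_inl_eq_zero h]
  simp

lemma DC_eq_zero {P : Poly n} {b : ℕ} (h : BiHom n P 0 b) : DC u P = 0 := by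
  rw [DC, Dop]
  refine Finset.sum_eq_zero fun x _ => ?_
  cases x with
  | inl j => rw [Sum.elim_inl, Sum.elim_inl, pderiv_inl_eq_zero h]; simp
  | inr j => rw [Sum.elim_inr, Sum.elim_inr, pderiv_inl_eq_zero h]; simp

lemma Delta_eq_zero {P : Poly n} {b : ℕ} (h : BiHom n P 0 b) : Delta u P = 0 := by
  rw [Delta, DA_eq_zero u (bihom_DB u h), DC_eq_zero u (bihom_DCb u h), add_zero]

lemma Delta_zero : Delta u (0 : Poly n) = 0 := by
  rw [Delta, DA, DB, DC, DCb, Dop_zero, Dop_zero, Dop_zero, Dop_zero, add_zero]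

lemma delta_kill : ∀ (m a b : ℕ) (T : Poly n), BiHom n T a b → a < m →
    (Delta u)^[m] T = 0 := by
  intro m
  induction m with
  | zero => omega
  | succ m ih =>
    intro a b T hT ha
    rw [Function.iterate_succ_apply]
    rcases Nat.eq_zero_or_pos a with h0 | hpos
    · subst h0
      rw [Delta_eq_zero u hT]
      exact Function.iterate_fixed (Delta_zero u) m
    · exact ih (a - 1) (b - 1) (Delta u T) (bihom_Delta u hT) (by omega)

/-! ### Euler identities -/

lemma euler_monomial_inl (α : Vars n →₀ ℕ) (c : ℂ) :
    eval (weval u) (Dop u Sum.inl (monomial α c))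
      = ((∑ j : Fin (2 * n), α (Sum.inl j) : ℕ) : ℂ) * eval (weval u) (monomial α c) := by
  rw [Dop, map_sum]
  simp only [pderiv_monomial, map_mul, eval_C, eval_monomial, Finsupp.prod_pow,
    Finsupp.coe_tsub, Pi.sub_apply]
  push_cast
  rw [Finset.sum_mul]
  refine Finset.sum_congr rfl fun j _ => ?_
  rcases Nat.eq_zero_or_pos (α (Sum.inl j)) with h0 | hpos
  · rw [h0]; simp
  · rw [← mul_prod_pow_sub (weval u) α (Sum.inl j) (by omega)]
    have hw : weval u (Sum.inl j) = u j := rfl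
    rw [hw]
    ring

lemma euler_monomial_inr (α : Vars n →₀ ℕ) (c : ℂ) :
    eval (weval u) (Dop (fun j => (starRingEnd ℂ) (u j)) Sum.inr (monomial α c))
      = ((∑ j : Fin (2 * n), α (Sum.inr j) : ℕ) : ℂ) * eval (weval u) (monomial α c) := by
  rw [Dop, map_sum]
  simp only [pderiv_monomial, map_mul, eval_C, eval_monomial, Finsupp.prod_pow,
    Finsupp.coe_tsub, Pi.sub_apply]
  push_cast
  rw [Finset.sum_mul]
  refine Finset.sum_congr rfl fun j _ => ?_
  rcases Nat.eq_zero_or_pos (α (Sum.inr j)) with h0 | hpos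
  · rw [h0]; simp
  · rw [← mul_prod_pow_sub (weval u) α (Sum.inr j) (by omega)]
    have hw : weval u (Sum.inr j) = (starRingEnd ℂ) (u j) := rfl
    rw [hw]
    ring

lemma eval_DA {P : Poly n} {a b : ℕ} (h : BiHom n P a b) :
    eval (weval u) (DA u P) = (a : ℂ) * eval (weval u) P := by
  conv_lhs => rw [P.as_sum]
  conv_rhs => rw [P.as_sum]
  rw [DA, Dop_sum, map_sum, map_sum, Finset.mul_sum]
  refine Finset.sum_congr rfl fun α hα => ?_
  rw [euler_monomial_inl, (h α hα).1]

lemma eval_DB {P : Poly n} {a b : ℕ} (h : BiHom n P a b) :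
    eval (weval u) (DB u P) = (b : ℂ) * eval (weval u) P := by
  conv_lhs => rw [P.as_sum]
  conv_rhs => rw [P.as_sum]
  rw [DB, Dop_sum, map_sum, map_sum, Finset.mul_sum]
  refine Finset.sum_congr rfl fun α hα => ?_
  rw [euler_monomial_inr, (h α hα).2]

end Core
section MainInd
variable {n : ℕ} (u : Fin (2 * n) → ℂ)

lemma Dop_sub {ι : Type*} [Fintype ι] (c : ι → ℂ) (v : ι → Vars n) (P Q : Poly n) :
    Dop c v (P - Q) = Dop c v P - Dop c v Q := by
  simp [Dop, mul_sub, Finset.sum_sub_distrib]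

lemma Eop_add (P Q : Poly n) : Eop n (P + Q) = Eop n P + Eop n Q := by
  rw [Eop, Eop, Eop, ← Finset.sum_add_distrib]
  refine Finset.sum_congr rfl fun j _ => ?_
  rw [map_add, map_add]
  ring

lemma Edag_add (P Q : Poly n) : Edag n (P + Q) = Edag n P + Edag n Q := by
  rw [Edag, Edag, Edag, ← neg_add, ← Finset.sum_add_distrib]
  congr 1
  refine Finset.sum_congr rfl fun j _ => ?_
  rw [map_add, map_add]
  ring

lemma Eop_zero : Eop n (0 : Poly n) = 0 := by
  simp [Eop]

lemma swap_DA_DB (P : Poly n) : DA u (DB u P) = DB u (DA u P) := Dop_comm _ _ _ _ _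
lemma swap_DC_DB (P : Poly n) : DC u (DB u P) = DB u (DC u P) := Dop_comm _ _ _ _ _
lemma swap_DCb_DB (P : Poly n) : DCb u (DB u P) = DB u (DCb u P) := Dop_comm _ _ _ _ _
lemma swap_DA_DC (P : Poly n) : DA u (DC u P) = DC u (DA u P) := Dop_comm _ _ _ _ _
lemma swap_DB_DCb (P : Poly n) : DB u (DCb u P) = DCb u (DB u P) := Dop_comm _ _ _ _ _

lemma DB_add (P Q : Poly n) : DB u (P + Q) = DB u P + DB u Q := Dop_add _ _ _ _
lemma DA_add (P Q : Poly n) : DA u (P + Q) = DA u P + DA u Q := Dop_add _ _ _ _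
lemma DC_sub (P Q : Poly n) : DC u (P - Q) = DC u P - DC u Q := Dop_sub _ _ _ _

lemma comm_Delta_DB (P : Poly n) : Delta u (DB u P) = DB u (Delta u P) := by
  rw [Delta, Delta, swap_DCb_DB, swap_DC_DB, swap_DA_DB, DB_add]

lemma comm_Delta_E (P : Poly n) : Delta u (Eop n P) = Eop n (Delta u P) := by
  rw [Delta, Delta, comm_DB_E, comm_DCb_E, comm_DA_E, comm_DC_E, swap_DB_DCb, Eop_add]
  abel

lemma comm_Delta_Edag (P : Poly n) : Delta u (Edag n P) = Edag n (Delta u P) := by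
  have h1 : DB u (Edag n P) = Edag n (DB u P) + DC u P := comm_DB_Edag u P
  have h2 : DCb u (Edag n P) = Edag n (DCb u P) - DA u P := comm_DCb_Edag u P
  rw [Delta, Delta, h1, h2, DA_add, DC_sub, comm_DA_Edag, comm_DC_Edag, swap_DA_DC, Edag_add]
  abel

lemma eval_DC_eq (P : Poly n) : eval (weval u) (DC u P) = eval (weval u) (Edag n P) := by
  rw [DC, Dop, Edag]
  simp only [Fintype.sum_sum_type, Sum.elim_inl, Sum.elim_inr, map_neg, map_add, map_sum,
    map_sub, map_mul, eval_C, eval_X, weval, neg_sub, Finset.sum_sub_distrib, neg_mul]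
  abel_nf
  simp [Finset.smul_sum]

lemma eval_DCb_eq (P : Poly n) : eval (weval u) (DCb u P) = - eval (weval u) (Eop n P) := by
  rw [DCb, Dop, Eop]
  simp only [Fintype.sum_sum_type, Sum.elim_inl, Sum.elim_inr, map_neg, map_add, map_sum,
    map_sub, map_mul, eval_C, eval_X, weval, neg_sub, Finset.sum_sub_distrib, neg_mul]
  abel_nf
  simp [Finset.smul_sum]

lemma eval_Delta {P : Poly n} {a b : ℕ} (hP : BiHom n P a b) (hE : Edag n P = 0) :
    eval (weval u) (Delta u P) = (a : ℂ) * ((b : ℂ) + 1) * eval (weval u) P := by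
  rw [Delta, map_add]
  have h1 : eval (weval u) (DA u (DB u P)) = (a : ℂ) * ((b : ℂ) * eval (weval u) P) := by
    rw [eval_DA u (bihom_DB u hP), eval_DB u hP]
  have h2 : eval (weval u) (DC u (DCb u P)) = (a : ℂ) * eval (weval u) P := by
    rw [eval_DC_eq u (DCb u P)]
    have hc : Edag n (DCb u P) = DCb u (Edag n P) + DA u P :=
      sub_eq_iff_eq_add.mp (comm_DCb_Edag u P).symm
    rw [hc, hE, show DCb u (0 : Poly n) = 0 from Dop_zero _ _, zero_add]
    exact eval_DA u hP
  rw [h1, h2]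
  ring

lemma bihom00 {R : Poly n} (h : BiHom n R 0 0) : R = C (coeff 0 R) := by
  apply MvPolynomial.ext
  intro α
  rw [coeff_C]
  by_cases hα : (0 : Vars n →₀ ℕ) = α
  · rw [if_pos hα, ← hα]
  · rw [if_neg hα]
    by_contra hne
    have hmem : α ∈ R.support := MvPolynomial.mem_support_iff.mpr hne
    obtain ⟨h1, h2⟩ := h α hmem
    have hz : α = 0 := by
      apply Finsupp.ext
      intro v
      rw [Finsupp.coe_zero, Pi.zero_apply]
      cases v with
      | inl j => exact Finset.sum_eq_zero_iff.mp h1 j (Finset.mem_univ j)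
      | inr j => exact Finset.sum_eq_zero_iff.mp h2 j (Finset.mem_univ j)
    exact hα hz.symm

lemma bihom00_eval {R : Poly n} (h : BiHom n R 0 0) : R = C (eval (weval u) R) := by
  have hC := bihom00 (n := n) h
  have he : eval (weval u) R = coeff 0 R := by
    conv_lhs => rw [hC]
    rw [eval_C]
  rw [he]
  exact hC

lemma main_zero : ∀ (q : ℕ) (R : Poly n), BiHom n R 0 q →
    (DB u)^[q] R = C ((q.factorial : ℂ) * eval (weval u) R) := by
  intro q
  induction q with
  | zero =>
    intro R hR
    rw [Function.iterate_zero_apply, Nat.factorial_zero]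
    push_cast
    rw [one_mul]
    exact bihom00_eval u hR
  | succ q ih =>
    intro R hR
    rw [Function.iterate_succ_apply]
    have hDB : BiHom n (DB u R) 0 q := by
      have := bihom_DB u hR
      simpa using this
    rw [ih (DB u R) hDB, eval_DB u hR]
    congr 1
    rw [Nat.factorial_succ]
    push_cast
    ring

/-- `ν_{p,q} = p!(q+1)!/(q-p+1)`. -/
def nu (p q : ℕ) : ℂ :=
  (p.factorial : ℂ) * ((q + 1).factorial : ℂ) / (((q - p + 1 : ℕ) : ℂ))

lemma main_ind (p : ℕ) : ∀ (q : ℕ) (R : Poly n), p ≤ q → BiHom n R p q → Edag n R = 0 →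
    (Delta u)^[p] ((DB u)^[q - p] R) = C (nu p q * eval (weval u) R) := by
  induction p with
  | zero =>
    intro q R _ hR _
    rw [Function.iterate_zero_apply, Nat.sub_zero, main_zero u q R hR]
    congr 1
    rw [nu, Nat.factorial_zero]
    have hq : (q - 0 + 1 : ℕ) = q + 1 := by omega
    rw [hq, Nat.factorial_succ]
    have hne : ((q + 1 : ℕ) : ℂ) ≠ 0 := by
      exact_mod_cast Nat.succ_ne_zero q
    push_cast
    push_cast at hne
    field_simp
    try ring
  | succ p ih =>
    intro q R hpq hR hE
    obtain ⟨qq, rfl⟩ : ∃ qq, q = qq + 1 := ⟨q - 1, by omega⟩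
    have hstep : qq + 1 - (p + 1) = qq - p := by omega
    rw [hstep, Function.iterate_succ_apply, iter_comm_one (comm_Delta_DB u) (qq - p) R]
    have hbR : BiHom n (Delta u R) p qq := by
      have := bihom_Delta u hR
      simpa using this
    have hER : Edag n (Delta u R) = 0 := by
      rw [← comm_Delta_Edag, hE, Delta_zero]
    rw [ih qq (Delta u R) (by omega) hbR hER, eval_Delta u hR hE]
    congr 1
    rw [nu, nu]
    have h1 : (qq + 1 - (p + 1) + 1 : ℕ) = qq - p + 1 := by omega
    rw [h1]
    have hne : ((qq - p + 1 : ℕ) : ℂ) ≠ 0 := by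
      exact_mod_cast Nat.succ_ne_zero (qq - p)
    field_simp
    push_cast [Nat.factorial_succ]
    ring

end MainInd
section FischerLemmas
variable {σ : Type*}

lemma fischer_eq_sum (P Q : MvPolynomial σ ℂ) (S : Finset (σ →₀ ℕ)) (hS : Q.support ⊆ S) :
    fischer P Q = ∑ α ∈ S, (starRingEnd ℂ) (P.coeff α) * Q.coeff α *
      α.prod (fun _ k => (k.factorial : ℂ)) := by
  rw [fischer]
  refine Finset.sum_subset hS fun α _ hα => ?_
  rw [MvPolynomial.notMem_support_iff.mp hα]
  ring

lemma fischer_add_left (P1 P2 Q : MvPolynomial σ ℂ) :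
    fischer (P1 + P2) Q = fischer P1 Q + fischer P2 Q := by
  rw [fischer, fischer, fischer, ← Finset.sum_add_distrib]
  refine Finset.sum_congr rfl fun α _ => ?_
  rw [MvPolynomial.coeff_add, map_add]
  ring

lemma fischer_sub_left (P1 P2 Q : MvPolynomial σ ℂ) :
    fischer (P1 - P2) Q = fischer P1 Q - fischer P2 Q := by
  rw [fischer, fischer, fischer, ← Finset.sum_sub_distrib]
  refine Finset.sum_congr rfl fun α _ => ?_
  rw [MvPolynomial.coeff_sub, map_sub]
  ring

lemma fischer_zero_left (Q : MvPolynomial σ ℂ) : fischer 0 Q = 0 := by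
  simp [fischer]

lemma fischer_C_mul_left (c : ℂ) (P Q : MvPolynomial σ ℂ) :
    fischer (C c * P) Q = (starRingEnd ℂ) c * fischer P Q := by
  rw [fischer, fischer, Finset.mul_sum]
  refine Finset.sum_congr rfl fun α _ => ?_
  rw [MvPolynomial.coeff_C_mul, map_mul]
  ring

lemma fischer_sum_left {β : Type*} (s : Finset β) (f : β → MvPolynomial σ ℂ)
    (Q : MvPolynomial σ ℂ) :
    fischer (∑ x ∈ s, f x) Q = ∑ x ∈ s, fischer (f x) Q := by
  classical
  induction s using Finset.induction_on with
  | empty => simpa using fischer_zero_left Q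
  | @insert x s hx ih =>
    rw [Finset.sum_insert hx, fischer_add_left, ih, Finset.sum_insert hx]

lemma fischer_add_right (P Q1 Q2 : MvPolynomial σ ℂ) :
    fischer P (Q1 + Q2) = fischer P Q1 + fischer P Q2 := by
  classical
  rw [fischer_eq_sum P (Q1 + Q2) (Q1.support ∪ Q2.support) MvPolynomial.support_add,
    fischer_eq_sum P Q1 (Q1.support ∪ Q2.support) Finset.subset_union_left,
    fischer_eq_sum P Q2 (Q1.support ∪ Q2.support) Finset.subset_union_right,
    ← Finset.sum_add_distrib]
  refine Finset.sum_congr rfl fun α _ => ?_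
  rw [MvPolynomial.coeff_add]
  ring

lemma fischer_zero_right (P : MvPolynomial σ ℂ) : fischer P 0 = 0 := by
  simp [fischer]

lemma fischer_C_mul_right (c : ℂ) (P Q : MvPolynomial σ ℂ) :
    fischer P (C c * Q) = c * fischer P Q := by
  classical
  have hsub : (C c * Q).support ⊆ Q.support := by
    rw [← smul_eq_C_mul]
    exact MvPolynomial.support_smul
  rw [fischer_eq_sum P (C c * Q) Q.support hsub, fischer, Finset.mul_sum]
  refine Finset.sum_congr rfl fun α _ => ?_
  rw [MvPolynomial.coeff_C_mul]
  ring

lemma fischer_sum_right {β : Type*} (s : Finset β) (P : MvPolynomial σ ℂ)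
    (f : β → MvPolynomial σ ℂ) :
    fischer P (∑ x ∈ s, f x) = ∑ x ∈ s, fischer P (f x) := by
  classical
  induction s using Finset.induction_on with
  | empty => simpa using fischer_zero_right P
  | @insert x s hx ih =>
    rw [Finset.sum_insert hx, fischer_add_right, ih, Finset.sum_insert hx]

lemma fischer_monomial [DecidableEq σ] (γ β : σ →₀ ℕ) (a b : ℂ) :
    fischer (monomial γ a) (monomial β b)
      = if γ = β then (starRingEnd ℂ) a * b * β.prod (fun _ k => (k.factorial : ℂ)) else 0 := by
  rw [fischer]
  by_cases hb : b = 0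
  · subst hb
    simp
  · rw [MvPolynomial.support_monomial, if_neg hb, Finset.sum_singleton,
      MvPolynomial.coeff_monomial, MvPolynomial.coeff_monomial, if_pos rfl]
    by_cases h : γ = β
    · rw [if_pos h, if_pos h]
    · rw [if_neg h, if_neg h, map_zero]
      ring

lemma prod_fact_sub_single {σ' : Type*} [Fintype σ'] [DecidableEq σ'] (β : σ' →₀ ℕ) (i : σ')
    (h : β i ≠ 0) :
    (∏ x, ((((β - Finsupp.single i 1 : σ' →₀ ℕ)) x).factorial : ℂ)) * (β i : ℂ)
      = ∏ x, ((β x).factorial : ℂ) := by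
  have key : ∀ x, ((β - Finsupp.single i 1 : σ' →₀ ℕ)) x = β x - if i = x then 1 else 0 := by
    intro x
    rw [Finsupp.tsub_apply, Finsupp.single_apply]
  rw [Finset.prod_congr rfl fun x _ => by rw [key x]]
  rw [← Finset.prod_erase_mul _ _ (Finset.mem_univ i),
    ← Finset.prod_erase_mul _ (fun x => ((β x).factorial : ℂ)) (Finset.mem_univ i)]
  have h1 : ∀ x ∈ Finset.univ.erase i,
      (((β x - if i = x then 1 else 0).factorial : ℕ) : ℂ) = ((β x).factorial : ℂ) := by
    intro x hx
    rw [if_neg (Ne.symm (Finset.ne_of_mem_erase hx)), Nat.sub_zero]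
  rw [Finset.prod_congr rfl h1, if_pos rfl]
  obtain ⟨m, hm⟩ := Nat.exists_eq_succ_of_ne_zero h
  rw [hm, Nat.succ_sub_one, Nat.factorial_succ]
  push_cast
  ring

lemma fischer_X_mul {σ' : Type*} [Fintype σ'] [DecidableEq σ'] (i : σ')
    (P Q : MvPolynomial σ' ℂ) :
    fischer (X i * P) Q = fischer P (pderiv i Q) := by
  induction P using MvPolynomial.induction_on' with
  | add P1 P2 g1 g2 => rw [mul_add, fischer_add_left, fischer_add_left, g1, g2]
  | monomial γ a =>
    induction Q using MvPolynomial.induction_on' with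
    | add Q1 Q2 g1 g2 => rw [map_add, fischer_add_right, fischer_add_right, g1, g2]
    | monomial β b =>
      have hXm : (X i : MvPolynomial σ' ℂ) * monomial γ a
          = monomial (Finsupp.single i 1 + γ) a := by
        rw [X, monomial_mul, one_mul]
      rw [hXm, pderiv_monomial, fischer_monomial, fischer_monomial]
      by_cases hb0 : β i = 0
      · have hne : ¬(Finsupp.single i 1 + γ = β) := by
          intro hcontra
          rw [← hcontra] at hb0
          simp [Finsupp.add_apply, Finsupp.single_apply] at hb0
        rw [if_neg hne, hb0]
        simp
      · have hcond : (Finsupp.single i 1 + γ = β) ↔ (γ = β - Finsupp.single i 1) := by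
          constructor
          · intro hh
            apply Finsupp.ext
            intro x
            have := congrArg (fun f : σ' →₀ ℕ => f x) hh
            simp only [Finsupp.add_apply] at this
            rw [Finsupp.tsub_apply]
            omega
          · intro hh
            subst hh
            apply Finsupp.ext
            intro x
            rw [Finsupp.add_apply, Finsupp.tsub_apply, Finsupp.single_apply]
            split_ifs with hxi
            · subst hxi
              omega
            · omega
        by_cases h : Finsupp.single i 1 + γ = β
        · rw [if_pos h, if_pos (hcond.mp h)]
          have hfact : ∀ (δ : σ' →₀ ℕ), δ.prod (fun _ k => (k.factorial : ℂ))
              = ∏ x, ((δ x).factorial : ℂ) := by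
            intro δ
            apply Finsupp.prod_fintype
            intro x
            rw [Nat.factorial_zero, Nat.cast_one]
          rw [hfact, hfact, ← prod_fact_sub_single β i hb0]
          ring
        · rw [if_neg h, if_neg fun hh => h (hcond.mpr hh)]

lemma fischer_one_left (Q : MvPolynomial σ ℂ) : fischer 1 Q = Q.coeff 0 := by
  classical
  rw [fischer]
  have hterm : ∀ α ∈ Q.support,
      (starRingEnd ℂ) ((1 : MvPolynomial σ ℂ).coeff α) * Q.coeff α *
        α.prod (fun _ k => (k.factorial : ℂ))
      = if α = 0 then Q.coeff 0 else 0 := by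
    intro α _
    rw [MvPolynomial.coeff_one]
    by_cases hα : α = 0
    · subst hα
      simp
    · rw [if_neg (fun hh => hα hh.symm), if_neg hα, map_zero]
      ring
  rw [Finset.sum_congr rfl hterm, Finset.sum_ite_eq' Q.support 0 (fun _ => Q.coeff 0)]
  by_cases h0 : (0 : σ →₀ ℕ) ∈ Q.support
  · rw [if_pos h0]
  · rw [if_neg h0, MvPolynomial.notMem_support_iff.mp h0]

end FischerLemmas

section Adjoints
variable {n : ℕ} (u : Fin (2 * n) → ℂ)

lemma fischer_Apoly (P Q : Poly n) : fischer (Apoly n u * P) Q = fischer P (DA u Q) := by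
  rw [Apoly, Finset.sum_mul, fischer_sum_left, DA, Dop, fischer_sum_right]
  refine Finset.sum_congr rfl fun j _ => ?_
  rw [mul_assoc, fischer_C_mul_left, fischer_X_mul, fischer_C_mul_right, Complex.conj_conj]

lemma fischer_Bpoly (P Q : Poly n) : fischer (Bpoly n u * P) Q = fischer P (DB u Q) := by
  rw [Bpoly, Finset.sum_mul, fischer_sum_left, DB, Dop, fischer_sum_right]
  refine Finset.sum_congr rfl fun j _ => ?_
  rw [mul_assoc, fischer_C_mul_left, fischer_X_mul, fischer_C_mul_right]

lemma fischer_Cpoly (P Q : Poly n) : fischer (Cpoly n u * P) Q = fischer P (DC u Q) := by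
  rw [Cpoly, Finset.sum_mul, fischer_sum_left, DC, Dop, Fintype.sum_sum_type,
    fischer_add_right, fischer_sum_right, fischer_sum_right]
  simp only [Sum.elim_inl, Sum.elim_inr, fischer_C_mul_right]
  have hterm : ∀ j : Fin n,
      fischer ((C (u (ir n j)) * X (Sum.inl (il n j))
          - C (u (il n j)) * X (Sum.inl (ir n j))) * P) Q
      = (starRingEnd ℂ) (u (ir n j)) * fischer P (pderiv (Sum.inl (il n j)) Q)
        - (starRingEnd ℂ) (u (il n j)) * fischer P (pderiv (Sum.inl (ir n j)) Q) := by
    intro j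
    rw [sub_mul, fischer_sub_left, mul_assoc, mul_assoc, fischer_C_mul_left,
      fischer_C_mul_left, fischer_X_mul, fischer_X_mul]
  rw [Finset.sum_congr rfl fun j _ => hterm j, Finset.sum_sub_distrib]
  simp only [neg_mul, Finset.sum_neg_distrib]
  abel

lemma fischer_Cbarpoly (P Q : Poly n) : fischer (Cbarpoly n u * P) Q = fischer P (DCb u Q) := by
  rw [Cbarpoly, Finset.sum_mul, fischer_sum_left, DCb, Dop, Fintype.sum_sum_type,
    fischer_add_right, fischer_sum_right, fischer_sum_right]
  simp only [Sum.elim_inl, Sum.elim_inr, fischer_C_mul_right]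
  have hterm : ∀ j : Fin n,
      fischer ((C ((starRingEnd ℂ) (u (ir n j))) * X (Sum.inr (il n j))
          - C ((starRingEnd ℂ) (u (il n j))) * X (Sum.inr (ir n j))) * P) Q
      = u (ir n j) * fischer P (pderiv (Sum.inr (il n j)) Q)
        - u (il n j) * fischer P (pderiv (Sum.inr (ir n j)) Q) := by
    intro j
    rw [sub_mul, fischer_sub_left, mul_assoc, mul_assoc, fischer_C_mul_left,
      fischer_C_mul_left, fischer_X_mul, fischer_X_mul, Complex.conj_conj, Complex.conj_conj]
  rw [Finset.sum_congr rfl fun j _ => hterm j, Finset.sum_sub_distrib]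
  simp only [neg_mul, Finset.sum_neg_distrib]
  abel

lemma fischer_mul_W (P Q : Poly n) :
    fischer ((Apoly n u * Bpoly n u + Cpoly n u * Cbarpoly n u) * P) Q
      = fischer P (Delta u Q) := by
  rw [add_mul, fischer_add_left,
    show Apoly n u * Bpoly n u * P = Bpoly n u * (Apoly n u * P) from by ring,
    show Cpoly n u * Cbarpoly n u * P = Cbarpoly n u * (Cpoly n u * P) from by ring,
    fischer_Bpoly, fischer_Cbarpoly, fischer_Apoly, fischer_Cpoly, Delta, fischer_add_right]

lemma fischer_pow_W : ∀ (p : ℕ) (P Q : Poly n),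
    fischer ((Apoly n u * Bpoly n u + Cpoly n u * Cbarpoly n u) ^ p * P) Q
      = fischer P ((Delta u)^[p] Q) := by
  intro p
  induction p with
  | zero =>
    intro P Q
    rw [pow_zero, one_mul, Function.iterate_zero_apply]
  | succ p ih =>
    intro P Q
    rw [pow_succ,
      show (Apoly n u * Bpoly n u + Cpoly n u * Cbarpoly n u) ^ p
          * (Apoly n u * Bpoly n u + Cpoly n u * Cbarpoly n u) * P
        = (Apoly n u * Bpoly n u + Cpoly n u * Cbarpoly n u)
          * ((Apoly n u * Bpoly n u + Cpoly n u * Cbarpoly n u) ^ p * P) from by ring,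
      fischer_mul_W, ih, Function.iterate_succ_apply]

lemma fischer_pow_B : ∀ (m : ℕ) (P Q : Poly n),
    fischer (Bpoly n u ^ m * P) Q = fischer P ((DB u)^[m] Q) := by
  intro m
  induction m with
  | zero =>
    intro P Q
    rw [pow_zero, one_mul, Function.iterate_zero_apply]
  | succ m ih =>
    intro P Q
    rw [pow_succ,
      show Bpoly n u ^ m * Bpoly n u * P = Bpoly n u * (Bpoly n u ^ m * P) from by ring,
      fischer_Bpoly, ih, Function.iterate_succ_apply]

lemma fischer_Zsymp (p q : ℕ) (S : Poly n) :
    fischer (Zsymp n p q u) S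
      = (starRingEnd ℂ) ((((q - p + 1 : ℕ) : ℂ)) / ((p.factorial : ℂ) * ((q + 1).factorial : ℂ)))
        * MvPolynomial.coeff 0 ((Delta u)^[p] ((DB u)^[q - p] S)) := by
  rw [Zsymp, mul_assoc, fischer_C_mul_left, fischer_pow_B,
    show (Apoly n u * Bpoly n u + Cpoly n u * Cbarpoly n u) ^ p
      = (Apoly n u * Bpoly n u + Cpoly n u * Cbarpoly n u) ^ p * 1 from (mul_one _).symm,
    fischer_pow_W, fischer_one_left]

lemma bihom_DB_iter (m : ℕ) {P : Poly n} {a b : ℕ} (h : BiHom n P a b) :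
    BiHom n ((DB u)^[m] P) a (b - m) := by
  induction m generalizing P b with
  | zero => simpa using h
  | succ m ih =>
    rw [Function.iterate_succ_apply]
    have heq : b - 1 - m = b - (m + 1) := by omega
    exact heq ▸ ih (bihom_DB u h)

end Adjoints
end SympAux

open SympAux in
theorem statement9 (n p q : ℕ) (hn : 1 ≤ n) (hpq : p ≤ q) (u : Fin (2 * n) → ℂ)
    (k : ℕ) (hk : k ≤ p)
    (R : MvPolynomial (Fin (2 * n) ⊕ Fin (2 * n)) ℂ)
    (hR : BiHom n R (p - k) (q + k)) (hRsymp : Edag n R = 0) :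
    fischer (Zsymp n p q u) ((Eop n)^[k] R)
      = (if k = 0 then 1 else 0) *
          eval (Sum.elim u (fun j => (starRingEnd ℂ) (u j))) R := by
  classical
  rcases Nat.eq_zero_or_pos k with hk0 | hkpos
  · subst hk0
    rw [if_pos rfl, one_mul, Function.iterate_zero_apply, fischer_Zsymp u p q R]
    have hbR : BiHom n R p q := hR
    rw [main_ind u p q R hpq hbR hRsymp]
    have hcoeff : ∀ c : ℂ, MvPolynomial.coeff (0 : (Fin (2 * n) ⊕ Fin (2 * n)) →₀ ℕ)
        (MvPolynomial.C c : SympAux.Poly n) = c := fun c => by simp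
    rw [hcoeff]
    have hw : SympAux.weval u = Sum.elim u (fun j => (starRingEnd ℂ) (u j)) := rfl
    rw [hw, SympAux.nu, map_div₀, map_mul, map_natCast, map_natCast, map_natCast]
    have h1 : (((q - p + 1 : ℕ) : ℂ)) ≠ 0 := by
      exact_mod_cast Nat.succ_ne_zero (q - p)
    have h2 : ((p.factorial : ℕ) : ℂ) ≠ 0 := by
      exact_mod_cast Nat.factorial_ne_zero p
    have h3 : (((q + 1).factorial : ℕ) : ℂ) ≠ 0 := by
      exact_mod_cast Nat.factorial_ne_zero (q + 1)
    rw [← mul_assoc]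
    have hAB : (((q - p + 1 : ℕ) : ℂ)) / ((p.factorial : ℂ) * ((q + 1).factorial : ℂ))
        * ((p.factorial : ℂ) * ((q + 1).factorial : ℂ) / (((q - p + 1 : ℕ) : ℂ))) = 1 := by
      rw [div_mul_div_comm,
        mul_comm ((p.factorial : ℂ) * ((q + 1).factorial : ℂ)) (((q - p + 1 : ℕ) : ℂ))]
      exact div_self (mul_ne_zero h1 (mul_ne_zero h2 h3))
    rw [hAB, one_mul]
  · have hkne : k ≠ 0 := by omega
    rw [if_neg hkne, zero_mul, fischer_Zsymp u p q _]
    have hcomm1 : (DB u)^[q - p] ((Eop n)^[k] R) = (Eop n)^[k] ((DB u)^[q - p] R) :=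
      iter_comm (comm_DB_E u) (q - p) k R
    rw [hcomm1]
    have hcomm2 : (Delta u)^[p] ((Eop n)^[k] ((DB u)^[q - p] R))
        = (Eop n)^[k] ((Delta u)^[p] ((DB u)^[q - p] R)) :=
      iter_comm (comm_Delta_E u) p k _
    rw [hcomm2]
    have h0 : (Delta u)^[p] ((DB u)^[q - p] R) = 0 := by
      apply delta_kill u p (p - k) (q + k - (q - p)) _ (bihom_DB_iter u (q - p) hR)
      omega
    rw [h0, Function.iterate_fixed Eop_zero k]
    simp

end
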